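/- The projective distance dist(x,y) = ‖x ∧ y‖/(‖x‖·‖y‖) between nonzero vectors of a finite-dimensional inner product space satisfies the triangle inequality: dist(x₁,x₃) ≤ dist(x₁,x₂) + dist(x₂,x₃). -/

import Mathlib

/-- The Gram determinant `det (⟪x i, y j⟫)` of two `m`-tuples of vectors.
For pure wedge products `X = x₁ ∧ ⋯ ∧ xₘ` and `Y = y₁ ∧ ⋯ ∧ yₘ` this is the
inner product `⟪X, Y⟫` in `⋀ᵐ U`, for the inner product on `⋀ᵐ U` making
wedge products of orthonormal vectors orthonormal. -/
noncomputable def gramDet (𝕜 : Type*) [RCLike 𝕜] {E : Type*} [NormedAddCommGroup E]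
    [InnerProductSpace 𝕜 E] {m : ℕ} (x y : Fin m → E) : 𝕜 :=
  Matrix.det (Matrix.of fun i j => (inner 𝕜 (x i) (y j) : 𝕜))

/-- The norm `‖x₁ ∧ ⋯ ∧ xₘ‖` of a pure wedge product, computed as the square
root of the Gram determinant. -/
noncomputable def wedgeNorm (𝕜 : Type*) [RCLike 𝕜] {E : Type*} [NormedAddCommGroup E]
    [InnerProductSpace 𝕜 E] {m : ℕ} (x : Fin m → E) : ℝ :=
  Real.sqrt (RCLike.re (gramDet 𝕜 x x))

/-- The projective distance `dist(x,y) = ‖x ∧ y‖ / (‖x‖ ‖y‖)` between two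
nonzero vectors. -/
noncomputable def pdist (𝕜 : Type*) [RCLike 𝕜] {E : Type*} [NormedAddCommGroup E]
    [InnerProductSpace 𝕜 E] (x y : E) : ℝ :=
  wedgeNorm 𝕜 ![x, y] / (‖x‖ * ‖y‖)

/-- The projective distance between the lines spanned by the pure wedge products
`x₁ ∧ ⋯ ∧ xₘ` and `y₁ ∧ ⋯ ∧ yₘ` in `⋀ᵐ U`:
`dist(X,Y) = ‖X ∧ Y‖/(‖X‖‖Y‖) = √(‖X‖²‖Y‖² − |⟪X,Y⟫|²)/(‖X‖‖Y‖)`.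
When `x`, `y` are bases of `m`-dimensional subspaces `V₁`, `V₂`, this is the
projective distance `dist(V₁,V₂)` (it does not depend on the chosen bases). -/
noncomputable def pdistT (𝕜 : Type*) [RCLike 𝕜] {E : Type*} [NormedAddCommGroup E]
    [InnerProductSpace 𝕜 E] {m : ℕ} (x y : Fin m → E) : ℝ :=
  Real.sqrt (RCLike.re (gramDet 𝕜 x x) * RCLike.re (gramDet 𝕜 y y)
      - ‖gramDet 𝕜 x y‖ ^ 2) / (wedgeNorm 𝕜 x * wedgeNorm 𝕜 y)

/-- The distance `dist(x, V)` from a nonzero point to a subspace: the infimum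
(in fact minimum) of `dist(x,y)` over nonzero `y ∈ V`. -/
noncomputable def pdistPV (𝕜 : Type*) [RCLike 𝕜] {E : Type*} [NormedAddCommGroup E]
    [InnerProductSpace 𝕜 E] (x : E) (V : Submodule 𝕜 E) : ℝ :=
  sInf {d : ℝ | ∃ y ∈ V, y ≠ 0 ∧ d = pdist 𝕜 x y}

section aux
variable {𝕜 : Type*} [RCLike 𝕜] {E : Type*} [NormedAddCommGroup E] [InnerProductSpace 𝕜 E]

local notation "⟪" x ", " y "⟫" => @inner 𝕜 _ _ x y

/-- `W x y` is `‖x ∧ y‖` computed from the 2×2 Gram determinant. -/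
noncomputable def W (x y : E) : ℝ := Real.sqrt (‖x‖^2 * ‖y‖^2 - ‖⟪x, y⟫‖^2)

lemma gram_two (x y : E) :
    RCLike.re (gramDet 𝕜 ![x, y] ![x, y]) = ‖x‖^2 * ‖y‖^2 - ‖⟪x, y⟫‖^2 := by
  simp only [gramDet, Matrix.det_fin_two, Matrix.of_apply, Matrix.cons_val_zero,
    Matrix.cons_val_one, Matrix.head_cons]
  rw [← inner_conj_symm y x, RCLike.mul_conj, inner_self_eq_norm_sq_to_K,
    inner_self_eq_norm_sq_to_K]
  simp [mul_pow]

lemma wedgeNorm_two (x y : E) : wedgeNorm 𝕜 ![x, y] = W (𝕜 := 𝕜) x y := by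
  rw [wedgeNorm, gram_two, W]

lemma inner_sq_le (x y : E) : ‖⟪x, y⟫‖^2 ≤ ‖x‖^2 * ‖y‖^2 := by
  have := norm_inner_le_norm (𝕜 := 𝕜) x y
  nlinarith [norm_nonneg (⟪x, y⟫), norm_nonneg x, norm_nonneg y]

lemma W_nonneg (x y : E) : 0 ≤ W (𝕜 := 𝕜) x y := Real.sqrt_nonneg _

lemma W_sq (x y : E) : (W (𝕜 := 𝕜) x y)^2 = ‖x‖^2 * ‖y‖^2 - ‖⟪x, y⟫‖^2 := by
  rw [W, Real.sq_sqrt]; linarith [inner_sq_le (𝕜 := 𝕜) x y]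

lemma norm_T (x y : E) :
    ‖((‖x‖ : 𝕜)^2) • y - ⟪x, y⟫ • x‖ = ‖x‖ * W (𝕜 := 𝕜) x y := by
  have hsq : ‖((‖x‖ : 𝕜)^2) • y - ⟪x, y⟫ • x‖^2 = (‖x‖ * W (𝕜 := 𝕜) x y)^2 := by
    rw [@norm_sub_sq 𝕜, inner_smul_left, inner_smul_right]
    rw [← inner_conj_symm y x, RCLike.mul_conj]
    have h1 : ((starRingEnd 𝕜) ((‖x‖ : 𝕜)^2)) = ((‖x‖ : 𝕜)^2) := by
      rw [map_pow, RCLike.conj_ofReal]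
    rw [h1]
    have h2 : RCLike.re (((‖x‖:𝕜)^2) * ((‖⟪x,y⟫‖ : 𝕜)^2)) = ‖x‖^2 * ‖⟪x,y⟫‖^2 := by
      norm_cast
    rw [norm_smul, norm_smul, mul_pow, mul_pow, h2, mul_pow, W_sq]
    have hxx : ‖((‖x‖ : 𝕜)^2)‖ = ‖x‖^2 := by
      rw [norm_pow]; simp
    rw [hxx]
    ring
  have h2 : 0 ≤ ‖x‖ * W (𝕜 := 𝕜) x y := mul_nonneg (norm_nonneg _) (W_nonneg _ _)
  nlinarith [norm_nonneg (((‖x‖ : 𝕜)^2) • y - ⟪x, y⟫ • x)]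

lemma W_add_le (x y z : E) (hx : x ≠ 0) :
    W (𝕜 := 𝕜) x (y + z) ≤ W (𝕜 := 𝕜) x y + W (𝕜 := 𝕜) x z := by
  have hx' : (0:ℝ) < ‖x‖ := norm_pos_iff.mpr hx
  have key : ‖x‖ * W (𝕜 := 𝕜) x (y + z) ≤ ‖x‖ * (W (𝕜 := 𝕜) x y + W (𝕜 := 𝕜) x z) := by
    rw [← norm_T]
    have : ((‖x‖ : 𝕜)^2) • (y + z) - ⟪x, y + z⟫ • x
        = (((‖x‖ : 𝕜)^2) • y - ⟪x, y⟫ • x) + (((‖x‖ : 𝕜)^2) • z - ⟪x, z⟫ • x) := by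
      rw [inner_add_right, smul_add, add_smul]; abel
    rw [this, mul_add, ← norm_T (𝕜 := 𝕜) x y, ← norm_T (𝕜 := 𝕜) x z]
    exact norm_add_le _ _
  exact le_of_mul_le_mul_left key hx'

lemma W_smul (x : E) (c : 𝕜) (y : E) :
    W (𝕜 := 𝕜) x (c • y) = ‖c‖ * W (𝕜 := 𝕜) x y := by
  rw [W, W, inner_smul_right, norm_smul, norm_mul, mul_pow, mul_pow]
  rw [show ‖x‖^2 * (‖c‖^2 * ‖y‖^2) - ‖c‖^2 * ‖⟪x,y⟫‖^2
      = ‖c‖^2 * (‖x‖^2 * ‖y‖^2 - ‖⟪x,y⟫‖^2) by ring,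
    Real.sqrt_mul (sq_nonneg _), Real.sqrt_sq (norm_nonneg _)]

lemma W_le (x y : E) : W (𝕜 := 𝕜) x y ≤ ‖x‖ * ‖y‖ := by
  rw [W]
  calc Real.sqrt (‖x‖^2 * ‖y‖^2 - ‖⟪x,y⟫‖^2) ≤ Real.sqrt ((‖x‖*‖y‖)^2) := by
        apply Real.sqrt_le_sqrt; nlinarith [norm_nonneg (⟪x,y⟫)]
    _ = ‖x‖ * ‖y‖ := Real.sqrt_sq (by positivity)

end aux

/-- the projective distance satisfies the triangle inequality. -/
theorem stmt1 {𝕜 : Type*} [RCLike 𝕜] {E : Type*} [NormedAddCommGroup E]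
    [InnerProductSpace 𝕜 E] [FiniteDimensional 𝕜 E]
    (x₁ x₂ x₃ : E) (h₁ : x₁ ≠ 0) (h₂ : x₂ ≠ 0) (h₃ : x₃ ≠ 0) :
    pdist 𝕜 x₁ x₃ ≤ pdist 𝕜 x₁ x₂ + pdist 𝕜 x₂ x₃ := by
  have n1 : (0:ℝ) < ‖x₁‖ := norm_pos_iff.mpr h₁
  have n2 : (0:ℝ) < ‖x₂‖ := norm_pos_iff.mpr h₂
  have n3 : (0:ℝ) < ‖x₃‖ := norm_pos_iff.mpr h₃
  set c : 𝕜 := (inner 𝕜 x₂ x₃ : 𝕜) / ((‖x₂‖ : 𝕜)^2) with hc_def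
  set w : E := x₃ - c • x₂ with hw_def
  have hn2K : ((‖x₂‖ : 𝕜)^2) ≠ 0 :=
    pow_ne_zero _ (RCLike.ofReal_ne_zero.mpr (ne_of_gt n2))
  have hcmul : ((‖x₂‖ : 𝕜)^2) * c = (inner 𝕜 x₂ x₃ : 𝕜) := by
    rw [hc_def, mul_div_assoc']; exact mul_div_cancel_left₀ _ hn2K
  -- W x₂ x₃ = ‖x₂‖ * ‖w‖
  have h23 : W (𝕜 := 𝕜) x₂ x₃ = ‖x₂‖ * ‖w‖ := by
    have hT : ((‖x₂‖ : 𝕜)^2) • x₃ - (inner 𝕜 x₂ x₃ : 𝕜) • x₂ = ((‖x₂‖ : 𝕜)^2) • w := by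
      rw [hw_def, smul_sub, smul_smul, hcmul]
    have := norm_T (𝕜 := 𝕜) x₂ x₃
    rw [hT, norm_smul] at this
    have hxx : ‖((‖x₂‖ : 𝕜)^2)‖ = ‖x₂‖^2 := by rw [norm_pow]; simp
    rw [hxx] at this
    have : ‖x₂‖ * (‖x₂‖ * ‖w‖) = ‖x₂‖ * W (𝕜 := 𝕜) x₂ x₃ := by
      rw [← this]; ring
    exact (mul_left_cancel₀ (ne_of_gt n2) this).symm
  have hdecomp : x₃ = c • x₂ + w := by rw [hw_def]; abel
  have h13 : W (𝕜 := 𝕜) x₁ x₃ ≤ ‖c‖ * W (𝕜 := 𝕜) x₁ x₂ + W (𝕜 := 𝕜) x₁ w := by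
    calc W (𝕜 := 𝕜) x₁ x₃ = W (𝕜 := 𝕜) x₁ (c • x₂ + w) := by rw [← hdecomp]
      _ ≤ W (𝕜 := 𝕜) x₁ (c • x₂) + W (𝕜 := 𝕜) x₁ w := W_add_le _ _ _ h₁
      _ = ‖c‖ * W (𝕜 := 𝕜) x₁ x₂ + W (𝕜 := 𝕜) x₁ w := by rw [W_smul]
  have h1w : W (𝕜 := 𝕜) x₁ w ≤ ‖x₁‖ * ‖w‖ := W_le _ _
  have hc : ‖c‖ * ‖x₂‖ ≤ ‖x₃‖ := by
    have h1 : ‖c‖ = ‖(inner 𝕜 x₂ x₃ : 𝕜)‖ / ‖x₂‖^2 := by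
      rw [hc_def, norm_div, norm_pow]; simp
    have h2 : ‖(inner 𝕜 x₂ x₃ : 𝕜)‖ ≤ ‖x₂‖ * ‖x₃‖ := norm_inner_le_norm x₂ x₃
    rw [h1, div_mul_eq_mul_div, div_le_iff₀ (by positivity)]
    nlinarith
  have key : ‖x₂‖ * W (𝕜 := 𝕜) x₁ x₃ ≤ ‖x₃‖ * W (𝕜 := 𝕜) x₁ x₂ + ‖x₁‖ * W (𝕜 := 𝕜) x₂ x₃ := by
    rw [h23]
    nlinarith [mul_le_mul_of_nonneg_left h13 (le_of_lt n2),
      mul_le_mul_of_nonneg_right hc (W_nonneg (𝕜 := 𝕜) x₁ x₂),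
      mul_le_mul_of_nonneg_left h1w (le_of_lt n2),
      W_nonneg (𝕜 := 𝕜) x₁ x₂, norm_nonneg w]
  simp only [pdist, wedgeNorm_two]
  rw [div_add_div _ _ (by positivity) (by positivity), div_le_div_iff₀ (by positivity) (by positivity)]
  nlinarith [mul_le_mul_of_nonneg_right key
      (show (0:ℝ) ≤ ‖x₁‖ * ‖x₂‖ * ‖x₃‖ by positivity)]
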